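/- Let b and p be real numbers with b ≥ 1 and p > 0. If p · b^p = b, then p = 1. Equivalently, for b ≥ 1 the equation b − p·b^p = 0 has p = 1 as its only positive real solution. -/
import Mathlib


/-- Key scalar identity in the proof of Lemma 2: for `b ≥ 1` and `p > 0`,
the equation `p * b ^ p = b` forces `p = 1`. -/
theorem stmt5 (b p : ℝ) (hb : 1 ≤ b) (hp : 0 < p)
    (h : p * b ^ p = b) : p = 1 := by
  rcases eq_or_lt_of_le hb with hb1 | hb1
  · rw [← hb1] at h
    simpa [Real.one_rpow] using h
  · by_contra hne
    rcases lt_or_gt_of_ne hne with hlt | hgt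
    · have h1 : b ^ p < b ^ (1 : ℝ) := Real.rpow_lt_rpow_left_iff hb1 |>.mpr hlt
      have hpos : (0 : ℝ) < b ^ p := Real.rpow_pos_of_pos (by linarith) p
      have : p * b ^ p < 1 * b ^ p := by
        exact mul_lt_mul_of_pos_right hlt hpos
      rw [Real.rpow_one] at h1
      nlinarith
    · have h1 : b ^ (1 : ℝ) < b ^ p := Real.rpow_lt_rpow_left_iff hb1 |>.mpr hgt
      have hpos : (0 : ℝ) < b ^ p := Real.rpow_pos_of_pos (by linarith) p
      have : 1 * b ^ p < p * b ^ p := mul_lt_mul_of_pos_right hgt hpos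
      rw [Real.rpow_one] at h1
      nlinarith
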